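/- Let n ≥ 1 and let G ≤ Diff̂(ℂⁿ,0) be an abelian subgroup of formal diffeomorphisms. Then at least one of the following holds: (1) there exists a nonzero formal vector field X̂ ∈ X̂(ℂⁿ,0) that is invariant by G; (2) G_Id = {Id}, i.e., the only element of G tangent to the identity is the identity. -/

import Mathlib

noncomputable section

namespace FormalGroups

/-- Formal power series in `n` complex variables: `ℂ[[z₁,…,zₙ]]`. -/
abbrev FPS (n : ℕ) := MvPowerSeries (Fin n) ℂ

/-- Formal vector fields on `(ℂⁿ,0)`: derivations of `ℂ[[z₁,…,zₙ]]`. -/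
abbrev FVF (n : ℕ) := Derivation ℂ (FPS n) (FPS n)

/-- The group of formal diffeomorphisms of `(ℂⁿ,0)`, encoded (isomorphically,
via the pullback action on power series) as the opposite of the group of
`ℂ`-algebra automorphisms of `ℂ[[z₁,…,zₙ]]`.  For `f : FDiff n`, `f.unop` is
the pullback `h ↦ h ∘ f`; multiplication `f * g` corresponds to the
composition `f ∘ g` of formal diffeomorphisms. -/
abbrev FDiff (n : ℕ) := (FPS n ≃ₐ[ℂ] FPS n)ᵐᵒᵖ

/-- The coordinate power series `zᵢ`. -/
def Z {n : ℕ} (i : Fin n) : FPS n := MvPowerSeries.X i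

/-- The `i`-th component power series `f̂ᵢ` of a formal diffeomorphism. -/
def comp {n : ℕ} (f : FDiff n) (i : Fin n) : FPS n := f.unop (Z i)

/-- Total degree of a monomial exponent. -/
def deg {n : ℕ} (d : Fin n →₀ ℕ) : ℕ := d.sum fun _ m => m

/-- A formal vector field belongs to `X̂(ℂⁿ,0)`: its coefficients vanish at `0`. -/
def VanishesAtZero {n : ℕ} (X : FVF n) : Prop :=
  ∀ i, MvPowerSeries.constantCoeff (σ := Fin n) (R := ℂ) (X (Z i)) = 0

/-- `f` is tangent to the identity: `f(z) = z + (order ≥ 2)`. -/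
def TangentToId {n : ℕ} (f : FDiff n) : Prop :=
  (∀ i, MvPowerSeries.constantCoeff (σ := Fin n) (R := ℂ) (comp f i) = 0) ∧
  ∀ i j, MvPowerSeries.coeff (R := ℂ) (Finsupp.single j 1) (comp f i) = if j = i then 1 else 0

/-- `f = exp (t X)`, expressed coefficientwise: `f̂ᵢ = Σ_j (tʲ/j!) X̂ʲ(zᵢ)`. -/
def IsExpT {n : ℕ} (f : FDiff n) (t : ℂ) (X : FVF n) : Prop :=
  ∀ i d, MvPowerSeries.coeff (R := ℂ) d (comp f i) =
    ∑' j : ℕ, (t ^ j / (Nat.factorial j : ℂ)) * MvPowerSeries.coeff (R := ℂ) d ((⇑X)^[j] (Z i))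

/-- `f = exp X`. -/
def IsExp {n : ℕ} (f : FDiff n) (X : FVF n) : Prop := IsExpT f 1 X

/-- The vector field `X` is invariant by the formal diffeomorphism `f`
(`f_* X = X`), i.e. `X` commutes with the pullback of `f`. -/
def InvariantBy {n : ℕ} (f : FDiff n) (X : FVF n) : Prop :=
  ∀ h, X (f.unop h) = f.unop (X h)

/-- `f_* X = c • X`  (projective invariance, with factor `c`). -/
def ProjInvariantBy {n : ℕ} (f : FDiff n) (X : FVF n) (c : ℂ) : Prop :=
  ∀ h, X (f.unop h) = c • f.unop (X h)

/-- The two vector fields commute: `[X,Y] = 0`. -/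
def CommuteVF {n : ℕ} (X Y : FVF n) : Prop := ∀ h, X (Y h) = Y (X h)

/-- All terms of the power series have degree at least `m`. -/
def OrderGE {n : ℕ} (F : FPS n) (m : ℕ) : Prop :=
  ∀ d, deg d < m → MvPowerSeries.coeff (R := ℂ) d F = 0

/-- The vector field vanishes to order at least `m` at the origin. -/
def VFOrderGE {n : ℕ} (X : FVF n) (m : ℕ) : Prop := ∀ i, OrderGE (X (Z i)) m

/-- `f` is tangent to the identity with order (exactly) `k`:
`f(z) = z + f_{k+1}(z) + ⋯` with `f_{k+1} ≠ 0`. -/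
def TangentOrder {n : ℕ} (f : FDiff n) (k : ℕ) : Prop :=
  1 ≤ k ∧
  (∀ i d, deg d ≤ k → MvPowerSeries.coeff (R := ℂ) d (comp f i) = MvPowerSeries.coeff (R := ℂ) d (Z i)) ∧
  ∃ i d, deg d = k + 1 ∧ MvPowerSeries.coeff (R := ℂ) d (comp f i) ≠ 0

/-- A dicritic diffeomorphism of order `k`: `f(z) = z + p(z)·z + (order ≥ k+2)`,
with `p ≠ 0` homogeneous of degree `k`. -/
def IsDicriticDiffeo {n : ℕ} (f : FDiff n) (k : ℕ) : Prop :=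
  1 ≤ k ∧
  (∀ i d, deg d ≤ k → MvPowerSeries.coeff (R := ℂ) d (comp f i) = MvPowerSeries.coeff (R := ℂ) d (Z i)) ∧
  ∃ p : MvPolynomial (Fin n) ℂ, p.IsHomogeneous k ∧ p ≠ 0 ∧
    ∀ i d, deg d = k + 1 →
      MvPowerSeries.coeff (R := ℂ) d (comp f i) = MvPowerSeries.coeff (R := ℂ) d ((p : FPS n) * Z i)

/-- A dicritic vector field of index `k` (order `k+1`):
`X = p(z)·R⃗ + (order ≥ k+2)` with `p ≠ 0` homogeneous of degree `k`,
where `R⃗ = Σ zᵢ ∂/∂zᵢ` is the radial vector field. -/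
def IsDicriticVF {n : ℕ} (X : FVF n) (k : ℕ) : Prop :=
  1 ≤ k ∧ VFOrderGE X (k + 1) ∧
  ∃ p : MvPolynomial (Fin n) ℂ, p.IsHomogeneous k ∧ p ≠ 0 ∧
    ∀ i d, deg d = k + 1 →
      MvPowerSeries.coeff (R := ℂ) d (X (Z i)) = MvPowerSeries.coeff (R := ℂ) d ((p : FPS n) * Z i)

/-- A regular dicritic vector field of index `k`: dicritic, and for the
homogeneous parts `pᵢ = q i` of degree `k+2` there are indices `i₀, j₀` with
`p` and `z_{j₀} q_{i₀} − z_{i₀} q_{j₀}` coprime. -/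
def IsRegDicriticVF {n : ℕ} (X : FVF n) (k : ℕ) : Prop :=
  1 ≤ k ∧ VFOrderGE X (k + 1) ∧
  ∃ (p : MvPolynomial (Fin n) ℂ) (q : Fin n → MvPolynomial (Fin n) ℂ),
    p.IsHomogeneous k ∧ p ≠ 0 ∧
    (∀ i d, deg d = k + 1 →
      MvPowerSeries.coeff (R := ℂ) d (X (Z i)) = MvPowerSeries.coeff (R := ℂ) d ((p : FPS n) * Z i)) ∧
    (∀ i, (q i).IsHomogeneous (k + 2)) ∧
    (∀ i d, deg d = k + 2 →
      MvPowerSeries.coeff (R := ℂ) d (X (Z i)) = MvPolynomial.coeff d (q i)) ∧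
    ∃ i₀ j₀ : Fin n,
      IsRelPrime p (MvPolynomial.X j₀ * q i₀ - MvPolynomial.X i₀ * q j₀)

/-- A regular dicritic diffeomorphism: its infinitesimal generator
`log f` is a regular dicritic vector field. -/
def IsRegDicriticDiffeo {n : ℕ} (f : FDiff n) (k : ℕ) : Prop :=
  ∃ X : FVF n, IsRegDicriticVF X k ∧ IsExp f X

/-- The derivative (linear part) `Df(0)` of `f` at `0`, as a matrix. -/
def Dmat {n : ℕ} (f : FDiff n) : Matrix (Fin n) (Fin n) ℂ :=
  Matrix.of fun i j => MvPowerSeries.coeff (R := ℂ) (Finsupp.single j 1) (comp f i)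

/-- `L` is the linear diffeomorphism `z ↦ M z`. -/
def IsLinearWith {n : ℕ} (L : FDiff n) (M : Matrix (Fin n) (Fin n) ℂ) : Prop :=
  ∀ i, comp L i = ∑ j, M i j • Z j

/-- Formal partial derivative `∂/∂zᵢ` on `ℂ[[z₁,…,zₙ]]`. -/
def pd {n : ℕ} (i : Fin n) (F : FPS n) : FPS n :=
  fun d => ((d i : ℂ) + 1) * MvPowerSeries.coeff (R := ℂ) (d + Finsupp.single i 1) F

/-- A formal meromorphic one-form `Σⱼ (Aⱼ/C) dzⱼ`, presented with a common
denominator `C ≠ 0` (its coefficients are elements `Aⱼ/C` of the fraction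
field `K̂ₙ` of `ℂ[[z₁,…,zₙ]]`). -/
structure MeroForm (n : ℕ) where
  A : Fin n → FPS n
  C : FPS n
  hC : C ≠ 0

/-- The one-form is closed (`dω = 0`), with denominators cleared. -/
def FormClosed {n : ℕ} (ω : MeroForm n) : Prop :=
  ∀ i j, pd i (ω.A j) * ω.C - ω.A j * pd i ω.C = pd j (ω.A i) * ω.C - ω.A i * pd j ω.C

/-- `g*ω = ω` (invariance of the one-form under pullback), denominators cleared. -/
def FormInvariantBy {n : ℕ} (g : FDiff n) (ω : MeroForm n) : Prop :=
  ∀ j, (∑ i, g.unop (ω.A i) * pd j (comp g i)) * ω.C = ω.A j * g.unop ω.C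

/-- `g*ω = a ω₁ + b ω₂`, denominators cleared. -/
def FormPullbackComb {n : ℕ} (g : FDiff n) (ω ω₁ ω₂ : MeroForm n) (a b : ℂ) : Prop :=
  ∀ j, (∑ i, g.unop (ω.A i) * pd j (comp g i)) * (ω₁.C * ω₂.C)
    = (a • (ω₁.A j * ω₂.C) + b • (ω₂.A j * ω₁.C)) * g.unop ω.C

/-- `ω₁, ω₂` are `ℂ`-linearly independent as meromorphic one-forms. -/
def FormsIndepC {n : ℕ} (ω₁ ω₂ : MeroForm n) : Prop :=
  ∀ a b : ℂ, (∀ j, a • (ω₁.A j * ω₂.C) + b • (ω₂.A j * ω₁.C) = 0) → a = 0 ∧ b = 0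

/-- A formal curve: a nonzero non-invertible formal series. -/
def IsFormalCurve (φ : FPS 2) : Prop :=
  φ ≠ 0 ∧ MvPowerSeries.constantCoeff (σ := Fin 2) (R := ℂ) φ = 0

/-- The formal curve `φ` is invariant by `f`: `φ ∘ f = u·φ` for a unit `u`. -/
def CurveInvariantBy (f : FDiff 2) (φ : FPS 2) : Prop :=
  ∃ u : FPS 2, IsUnit u ∧ f.unop φ = u * φ

/-- Linear coefficient of `φ` in the variable `zᵢ` (the differential `Dφ(0)`). -/
def lc (i : Fin 2) (φ : FPS 2) : ℂ := MvPowerSeries.coeff (R := ℂ) (Finsupp.single i 1) φ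

/-- The formal curves `φ, ψ` are transverse: each tangent space (kernel of the
differential at `0`) is one-dimensional and together they span `ℂ²`;
equivalently the two differentials at `0` are linearly independent. -/
def Transverse (φ ψ : FPS 2) : Prop :=
  lc 0 φ * lc 1 ψ - lc 1 φ * lc 0 ψ ≠ 0

/-- The formal power series is convergent (defines a germ of holomorphic
function): its coefficients grow at most geometrically. -/
def IsConvergent {n : ℕ} (F : FPS n) : Prop :=
  ∃ M A : ℝ, ∀ d, ‖MvPowerSeries.coeff (R := ℂ) d F‖ ≤ M * A ^ deg d

/-- `g* X = (p/q)·X`, denominators cleared: the pullback `g* X = (g⁻¹)_* X`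
of the vector field `X` equals the rational multiple `(p/q) X`. -/
def PullbackEqRat {n : ℕ} (g : FDiff n) (X : FVF n) (p q : FPS n) : Prop :=
  ∀ h, q * g.unop (X (g.unop.symm h)) = p * X h

/-- `g* X = s X₁ + t X₂` (pullback of `X` is a constant combination). -/
def PullbackEqComb {n : ℕ} (g : FDiff n) (X X₁ X₂ : FVF n) (s t : ℂ) : Prop :=
  ∀ h, g.unop (X (g.unop.symm h)) = s • X₁ h + t • X₂ h

end FormalGroups

namespace FormalGroups
open MvPowerSeries
open Polynomial
open scoped Classical

variable {n : ℕ}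

variable {n : ℕ}

lemma deg_add (a b : Fin n →₀ ℕ) : deg (a + b) = deg a + deg b := by
  unfold deg
  exact Finsupp.sum_add_index' (fun _ => rfl) (fun _ _ _ => rfl)

lemma deg_single (i : Fin n) : deg (Finsupp.single i 1) = 1 := by
  unfold deg
  rw [Finsupp.sum_single_index rfl]

lemma deg_zero : deg (0 : Fin n →₀ ℕ) = 0 := by
  unfold deg; simp

lemma apply_le_deg (d : Fin n →₀ ℕ) (j : Fin n) : d j ≤ deg d := by
  by_cases hj : j ∈ d.support
  · exact Finset.single_le_sum (f := fun i => d i) (fun _ _ => Nat.zero_le _) hj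
  · simp [Finsupp.notMem_support_iff.mp hj]

lemma eq_zero_of_deg_eq_zero {d : Fin n →₀ ℕ} (h : deg d = 0) : d = 0 := by
  ext j
  have := apply_le_deg d j
  simp only [Finsupp.coe_zero, Pi.zero_apply]
  omega

lemma orderGE_mono {F : FPS n} {m k : ℕ} (h : OrderGE F m) (hk : k ≤ m) : OrderGE F k :=
  fun d hd => h d (lt_of_lt_of_le hd hk)

lemma orderGE_sub {F G : FPS n} {m : ℕ} (hF : OrderGE F m) (hG : OrderGE G m) :
    OrderGE (F - G) m := by
  intro d hd; rw [map_sub, hF d hd, hG d hd, sub_zero]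

lemma orderGE_add {F G : FPS n} {m : ℕ} (hF : OrderGE F m) (hG : OrderGE G m) :
    OrderGE (F + G) m := by
  intro d hd; rw [map_add, hF d hd, hG d hd, add_zero]

lemma orderGE_sum {ι : Type*} {s : Finset ι} {F : ι → FPS n} {m : ℕ}
    (h : ∀ i ∈ s, OrderGE (F i) m) : OrderGE (∑ i ∈ s, F i) m := by
  intro d hd; rw [map_sum]; exact Finset.sum_eq_zero fun i hi => h i hi d hd

lemma orderGE_mul {F G : FPS n} {p q : ℕ} (hF : OrderGE F p) (hG : OrderGE G q) :
    OrderGE (F * G) (p + q) := by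
  intro d hd
  rw [MvPowerSeries.coeff_mul]
  apply Finset.sum_eq_zero
  rintro ⟨e, e'⟩ he
  rw [Finset.HasAntidiagonal.mem_antidiagonal] at he
  have hdeg : deg e + deg e' = deg d := by rw [← deg_add, he]
  by_cases h1 : deg e < p
  · rw [hF e h1, zero_mul]
  · have h2 : deg e' < q := by omega
    rw [hG e' h2, mul_zero]

lemma orderGE_X (i : Fin n) : OrderGE (Z i) 1 := by
  intro d hd
  have hd0 : d = 0 := eq_zero_of_deg_eq_zero (by omega)
  subst hd0
  rw [Z, MvPowerSeries.coeff_X, if_neg]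
  intro h
  have := congrArg deg h
  rw [deg_zero, deg_single] at this
  exact absurd this (by norm_num)

lemma orderGE_one_of_constantCoeff {F : FPS n}
    (h : MvPowerSeries.constantCoeff (σ := Fin n) (R := ℂ) F = 0) : OrderGE F 1 := by
  intro d hd
  have hd0 : d = 0 := eq_zero_of_deg_eq_zero (by omega)
  subst hd0
  rw [MvPowerSeries.coeff_zero_eq_constantCoeff]
  exact h

/-- The `i`-th section of the decomposition `h = Σ zᵢ · sect i h`. -/
def sect (i : Fin n) (h : FPS n) : FPS n :=
  fun e => if ∀ j, j < i → e j = 0 then h (e + Finsupp.single i 1) else 0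

lemma sect_order {h : FPS n} {m : ℕ} (hh : OrderGE h (m + 1)) (i : Fin n) :
    OrderGE (sect i h) m := by
  intro d hd
  rw [MvPowerSeries.coeff_apply]
  unfold sect
  split
  · have : deg (d + Finsupp.single i 1) < m + 1 := by
      rw [deg_add, deg_single]; omega
    have := hh _ this
    rwa [MvPowerSeries.coeff_apply] at this
  · rfl

lemma coeff_X_mul' (i : Fin n) (g : FPS n) (d : Fin n →₀ ℕ) :
    MvPowerSeries.coeff (R := ℂ) d (Z i * g) =
      if Finsupp.single i 1 ≤ d then MvPowerSeries.coeff (R := ℂ) (d - Finsupp.single i 1) g else 0 := by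
  rw [MvPowerSeries.coeff_mul]
  by_cases hle : Finsupp.single i 1 ≤ d
  · rw [if_pos hle]
    rw [Finset.sum_eq_single (Finsupp.single i 1, d - Finsupp.single i 1)]
    · rw [Z, MvPowerSeries.coeff_X, if_pos rfl, one_mul]
    · rintro ⟨e, e'⟩ hmem hne
      rw [Finset.HasAntidiagonal.mem_antidiagonal] at hmem
      by_cases he : e = Finsupp.single i 1
      · exfalso
        apply hne
        subst he
        have he' : e' = d - Finsupp.single i 1 := by
          rw [← hmem, add_tsub_cancel_left]
        rw [he']
      · rw [Z, MvPowerSeries.coeff_X, if_neg he, zero_mul]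
    · intro hnotmem
      exfalso
      apply hnotmem
      rw [Finset.HasAntidiagonal.mem_antidiagonal]
      exact add_tsub_cancel_of_le hle
  · rw [if_neg hle]
    apply Finset.sum_eq_zero
    rintro ⟨e, e'⟩ hmem
    rw [Finset.HasAntidiagonal.mem_antidiagonal] at hmem
    have he : e ≠ Finsupp.single i 1 := by
      rintro rfl
      exact hle (hmem ▸ le_self_add)
    rw [Z, MvPowerSeries.coeff_X, if_neg he, zero_mul]

lemma decomp (h : FPS n) (hc : MvPowerSeries.constantCoeff (σ := Fin n) (R := ℂ) h = 0) :
    ∑ i : Fin n, Z i * sect i h = h := by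
  apply MvPowerSeries.ext
  intro d
  rw [map_sum]
  by_cases hd : d = 0
  · subst hd
    have h0 : (MvPowerSeries.coeff (R := ℂ) (0 : Fin n →₀ ℕ)) h = 0 := by
      rw [MvPowerSeries.coeff_zero_eq_constantCoeff]; exact hc
    rw [h0]
    apply Finset.sum_eq_zero
    intro i _
    rw [coeff_X_mul', if_neg]
    rw [Finsupp.single_le_iff]
    simp
  · have hne : d.support.Nonempty := Finsupp.support_nonempty_iff.mpr hd
    set i₀ := d.support.min' hne with hi₀
    have hdi₀ : d i₀ ≠ 0 := Finsupp.mem_support_iff.mp (d.support.min'_mem hne)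
    have hmin : ∀ j, j < i₀ → d j = 0 := by
      intro j hj
      by_contra hdj
      exact absurd (d.support.min'_le j (Finsupp.mem_support_iff.mpr hdj)) (not_le.mpr hj)
    rw [Finset.sum_eq_single i₀]
    · rw [coeff_X_mul', if_pos (Finsupp.single_le_iff.mpr (by omega))]
      rw [MvPowerSeries.coeff_apply]
      unfold sect
      rw [if_pos, tsub_add_cancel_of_le (Finsupp.single_le_iff.mpr (by omega))]
      · rfl
      · intro j hj
        rw [Finsupp.tsub_apply, Finsupp.single_apply, if_neg (by omega : ¬ i₀ = j)]
        simp [hmin j hj]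
    · intro i _ hii₀
      rw [coeff_X_mul']
      rcases lt_or_gt_of_ne hii₀ with hlt | hgt
      · rw [if_neg]
        rw [Finsupp.single_le_iff]
        have := hmin i hlt
        omega
      · by_cases hle : Finsupp.single i 1 ≤ d
        · rw [if_pos hle, MvPowerSeries.coeff_apply]
          unfold sect
          rw [if_neg]
          intro hall
          have := hall i₀ hgt
          rw [Finsupp.tsub_apply, Finsupp.single_apply, if_neg (by omega : ¬ i = i₀)] at this
          omega
        · rw [if_neg hle]
    · intro habs
      exact absurd (Finset.mem_univ i₀) habs


section Auto
variable (Φ : FPS n ≃ₐ[ℂ] FPS n)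

lemma constantCoeff_of_order2 (h2 : ∀ i, OrderGE (Φ (Z i) - Z i) 2) (i : Fin n) :
    MvPowerSeries.constantCoeff (σ := Fin n) (R := ℂ) (Φ (Z i)) = 0 := by
  have h0 := h2 i 0 (by rw [deg_zero]; omega)
  rw [map_sub] at h0
  have hx : (MvPowerSeries.coeff (R := ℂ) (0 : Fin n →₀ ℕ)) (Z i) = 0 :=
    orderGE_X i 0 (by rw [deg_zero]; omega)
  rw [hx, sub_zero, MvPowerSeries.coeff_zero_eq_constantCoeff] at h0
  exact h0

lemma delta_raises (h2 : ∀ i, OrderGE (Φ (Z i) - Z i) 2) :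
    ∀ m (h : FPS n), OrderGE h m → OrderGE (Φ h - h) (m + 1) := by
  intro m
  induction m with
  | zero =>
    intro h _
    apply orderGE_one_of_constantCoeff
    set c := MvPowerSeries.constantCoeff (σ := Fin n) (R := ℂ) h with hc
    have hCalg : (MvPowerSeries.C (σ := Fin n) (R := ℂ)) c = algebraMap ℂ (FPS n) c := by
      rw [MvPowerSeries.algebraMap_apply]; simp
    have hΦC : Φ ((MvPowerSeries.C (σ := Fin n) (R := ℂ)) c) = (MvPowerSeries.C (σ := Fin n) (R := ℂ)) c := by
      rw [hCalg, AlgEquiv.commutes]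
    have hkey : Φ h - h = Φ (h - (MvPowerSeries.C (σ := Fin n) (R := ℂ)) c)
        - (h - (MvPowerSeries.C (σ := Fin n) (R := ℂ)) c) := by
      rw [map_sub, hΦC]; ring
    have hc0 : MvPowerSeries.constantCoeff (σ := Fin n) (R := ℂ)
        (h - (MvPowerSeries.C (σ := Fin n) (R := ℂ)) c) = 0 := by
      rw [map_sub, MvPowerSeries.constantCoeff_C, sub_self]
    rw [hkey, ← decomp _ hc0, map_sum, ← Finset.sum_sub_distrib, map_sum]
    apply Finset.sum_eq_zero
    intro i _
    simp only [map_mul, map_sub]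
    rw [constantCoeff_of_order2 Φ h2 i]
    have hZ : MvPowerSeries.constantCoeff (σ := Fin n) (R := ℂ) (Z i) = 0 := by
      rw [Z, MvPowerSeries.constantCoeff_X]
    rw [hZ, zero_mul, zero_mul, sub_zero]
  | succ m ih =>
    intro h hh
    have hc0 : MvPowerSeries.constantCoeff (σ := Fin n) (R := ℂ) h = 0 := by
      have := hh 0 (by rw [deg_zero]; omega)
      rwa [MvPowerSeries.coeff_zero_eq_constantCoeff] at this
    have hdec := decomp h hc0
    rw [← hdec, map_sum, ← Finset.sum_sub_distrib]
    apply orderGE_sum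
    intro i _
    have key : Φ (Z i * sect i h) - Z i * sect i h
        = (Φ (Z i) - Z i) * Φ (sect i h) + Z i * (Φ (sect i h) - sect i h) := by
      rw [map_mul]; ring
    rw [key]
    have hs : OrderGE (sect i h) m := sect_order hh i
    have hΦs : OrderGE (Φ (sect i h)) m := by
      have h1 := ih (sect i h) hs
      have heq : Φ (sect i h) = sect i h + (Φ (sect i h) - sect i h) := by ring
      rw [heq]
      exact orderGE_add hs (orderGE_mono h1 (by omega))
    apply orderGE_add
    · exact orderGE_mono (orderGE_mul (h2 i) hΦs) (by omega)
    · exact orderGE_mono (orderGE_mul (orderGE_X i) (ih (sect i h) hs)) (by omega)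

lemma auto_preserves (h0 : ∀ i, MvPowerSeries.constantCoeff (σ := Fin n) (R := ℂ) (Φ (Z i)) = 0) :
    ∀ m (h : FPS n), OrderGE h m → OrderGE (Φ h) m := by
  intro m
  induction m with
  | zero => intro h _ d hd; omega
  | succ m ih =>
    intro h hh
    have hc0 : MvPowerSeries.constantCoeff (σ := Fin n) (R := ℂ) h = 0 := by
      have := hh 0 (by rw [deg_zero]; omega)
      rwa [MvPowerSeries.coeff_zero_eq_constantCoeff] at this
    rw [← decomp h hc0, map_sum]
    apply orderGE_sum
    intro i _
    rw [map_mul]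
    have h1 : OrderGE (Φ (Z i)) 1 := orderGE_one_of_constantCoeff (h0 i)
    exact orderGE_mono (orderGE_mul h1 (ih (sect i h) (sect_order hh i))) (by omega)

lemma fix_coords (hfix : ∀ i, Φ (Z i) = Z i) (h : FPS n) : Φ h = h := by
  apply MvPowerSeries.ext
  suffices H : ∀ k d (h : FPS n), deg d = k →
      MvPowerSeries.coeff (R := ℂ) d (Φ h) = MvPowerSeries.coeff (R := ℂ) d h by
    intro d; exact H (deg d) d h rfl
  intro k
  induction k using Nat.strong_induction_on with
  | _ k ih =>
    intro d h hdk
    have h2 : ∀ i, OrderGE (Φ (Z i) - Z i) 2 := by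
      intro i; rw [hfix i, sub_self]; intro e he; exact map_zero _
    -- reduce to a difference
    suffices hs : MvPowerSeries.coeff (R := ℂ) d (Φ h - h) = 0 by
      rw [map_sub] at hs
      exact sub_eq_zero.mp hs
    set c := MvPowerSeries.constantCoeff (σ := Fin n) (R := ℂ) h with hc
    have hCalg : (MvPowerSeries.C (σ := Fin n) (R := ℂ)) c = algebraMap ℂ (FPS n) c := by
      rw [MvPowerSeries.algebraMap_apply]; simp
    have hΦC : Φ ((MvPowerSeries.C (σ := Fin n) (R := ℂ)) c) = (MvPowerSeries.C (σ := Fin n) (R := ℂ)) c := by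
      rw [hCalg, AlgEquiv.commutes]
    have hkey : Φ h - h = Φ (h - (MvPowerSeries.C (σ := Fin n) (R := ℂ)) c)
        - (h - (MvPowerSeries.C (σ := Fin n) (R := ℂ)) c) := by
      rw [map_sub, hΦC]; ring
    have hc0 : MvPowerSeries.constantCoeff (σ := Fin n) (R := ℂ)
        (h - (MvPowerSeries.C (σ := Fin n) (R := ℂ)) c) = 0 := by
      rw [map_sub, MvPowerSeries.constantCoeff_C, sub_self]
    rw [hkey, ← decomp _ hc0, map_sum, ← Finset.sum_sub_distrib, map_sum]
    apply Finset.sum_eq_zero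
    intro i _
    rw [map_mul, hfix i]
    have hsub : Z i * Φ (sect i (h - (MvPowerSeries.C (σ := Fin n) (R := ℂ)) c))
        - Z i * sect i (h - (MvPowerSeries.C (σ := Fin n) (R := ℂ)) c)
        = Z i * (Φ (sect i (h - (MvPowerSeries.C (σ := Fin n) (R := ℂ)) c))
            - sect i (h - (MvPowerSeries.C (σ := Fin n) (R := ℂ)) c)) := by ring
    rw [map_sub, ← map_sub, hsub, coeff_X_mul']
    split
    · next hle =>
      have hdeg' : deg (d - Finsupp.single i 1) < k := by
        have : (d - Finsupp.single i 1) + Finsupp.single i 1 = d :=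
          tsub_add_cancel_of_le hle
        have hd2 := congrArg deg this
        rw [deg_add, deg_single] at hd2
        omega
      rw [map_sub]
      have := ih _ hdeg' (d - Finsupp.single i 1) (sect i (h - (MvPowerSeries.C (σ := Fin n) (R := ℂ)) c)) rfl
      rw [this, sub_self]
    · rfl

/-- `Δ = Φ - id` as a linear endomorphism. -/
def Δop : Module.End ℂ (FPS n) := Φ.toLinearMap - 1

lemma Δop_apply (x : FPS n) : Δop Φ x = Φ x - x := rfl

/-- Coefficients of the logarithm series. -/
def cc (j : ℕ) : ℂ := (-1) ^ (j + 1) / j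

lemma cc_zero : cc 0 = 0 := by simp [cc]

lemma cc_one : cc 1 = 1 := by norm_num [cc]

lemma delta_pow_raise (h2 : ∀ i, OrderGE (Φ (Z i) - Z i) 2) (t : ℕ) {m : ℕ} {x : FPS n}
    (hx : OrderGE x m) : OrderGE ((Δop Φ ^ t) x) (m + t) := by
  induction t with
  | zero => simpa using hx
  | succ t ih =>
    rw [pow_succ']
    have : (Δop Φ * Δop Φ ^ t) x = Δop Φ ((Δop Φ ^ t) x) := rfl
    rw [this, Δop_apply]
    exact orderGE_mono (delta_raises Φ h2 (m + t) _ ih) (by omega)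

lemma delta_pow_order (h2 : ∀ i, OrderGE (Φ (Z i) - Z i) 2) (j : ℕ) (h : FPS n) :
    OrderGE ((Δop Φ ^ j) h) j := by
  have := delta_pow_raise Φ h2 j (m := 0) (x := h) (fun d hd => by omega)
  simpa using this

/-- The logarithm of `Φ`, defined coefficientwise. -/
def Dfun (h : FPS n) : FPS n :=
  fun d => ∑ j ∈ Finset.range (deg d + 1), cc j * MvPowerSeries.coeff (R := ℂ) d ((Δop Φ ^ j) h)

lemma Dfun_coeff (h : FPS n) (d : Fin n →₀ ℕ) :
    MvPowerSeries.coeff (R := ℂ) d (Dfun Φ h) =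
      ∑ j ∈ Finset.range (deg d + 1), cc j * MvPowerSeries.coeff (R := ℂ) d ((Δop Φ ^ j) h) := rfl

lemma Dfun_stable (h2 : ∀ i, OrderGE (Φ (Z i) - Z i) 2) (h : FPS n) (d : Fin n →₀ ℕ)
    {N : ℕ} (hN : deg d ≤ N) :
    MvPowerSeries.coeff (R := ℂ) d (Dfun Φ h) =
      ∑ j ∈ Finset.range (N + 1), cc j * MvPowerSeries.coeff (R := ℂ) d ((Δop Φ ^ j) h) := by
  rw [Dfun_coeff]
  apply Finset.sum_subset (Finset.range_subset_range.mpr (by omega))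
  intro j hj hnj
  rw [Finset.mem_range] at hj hnj
  rw [delta_pow_order Φ h2 j h d (by omega), mul_zero]

lemma Dfun_add (x y : FPS n) : Dfun Φ (x + y) = Dfun Φ x + Dfun Φ y := by
  apply MvPowerSeries.ext
  intro d
  rw [map_add, Dfun_coeff, Dfun_coeff, Dfun_coeff, ← Finset.sum_add_distrib]
  apply Finset.sum_congr rfl
  intro j _
  rw [map_add, map_add, mul_add]

lemma Dfun_smul (a : ℂ) (x : FPS n) : Dfun Φ (a • x) = a • Dfun Φ x := by
  apply MvPowerSeries.ext
  intro d
  rw [Dfun_coeff, MvPowerSeries.coeff_smul, Dfun_coeff, Finset.mul_sum]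
  apply Finset.sum_congr rfl
  intro j _
  rw [map_smul, MvPowerSeries.coeff_smul]
  ring

/-- Normalized descending Pochhammer polynomial: `Bpoly j` evaluates to `choose · j`. -/
def Bpoly (j : ℕ) : Polynomial ℂ := Polynomial.C ((j.factorial : ℂ)⁻¹) * descPochhammer ℂ j

lemma Bpoly_eval_nat (m j : ℕ) : (Bpoly j).eval (m : ℂ) = (m.choose j : ℂ) := by
  rw [Bpoly, Polynomial.eval_mul, Polynomial.eval_C, descPochhammer_eval_eq_descFactorial,
    Nat.descFactorial_eq_factorial_mul_choose]
  push_cast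
  rw [← mul_assoc, inv_mul_cancel₀, one_mul]
  exact_mod_cast Nat.factorial_ne_zero j

lemma Bpoly_eval_zero_zero : (Bpoly 0).eval 0 = 1 := by
  simp [Bpoly, descPochhammer_zero]

lemma Bpoly_eval_zero_succ (j : ℕ) : (Bpoly (j + 1)).eval 0 = 0 := by
  rw [Bpoly, Polynomial.eval_mul, descPochhammer_succ_left, Polynomial.eval_mul,
    Polynomial.eval_X, zero_mul, mul_zero]

lemma descPochhammer_eval_neg_one (j : ℕ) :
    (descPochhammer ℂ j).eval (-1) = (-1) ^ j * (j.factorial : ℂ) := by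
  induction j with
  | zero => simp [descPochhammer_zero]
  | succ j ih =>
    rw [descPochhammer_succ_right, Polynomial.eval_mul, ih, Polynomial.eval_sub,
      Polynomial.eval_X, Polynomial.eval_natCast, Nat.factorial_succ]
    push_cast
    ring

lemma Bpoly_deriv_zero (j : ℕ) : (Polynomial.derivative (Bpoly j)).eval 0 = cc j := by
  cases j with
  | zero => simp [Bpoly, descPochhammer_zero, cc_zero]
  | succ j =>
    rw [Bpoly, Polynomial.derivative_C_mul, Polynomial.eval_mul, Polynomial.eval_C,
      descPochhammer_succ_left, Polynomial.derivative_mul, Polynomial.derivative_X,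
      one_mul, Polynomial.eval_add, Polynomial.eval_mul, Polynomial.eval_X, zero_mul,
      add_zero, Polynomial.eval_comp, Polynomial.eval_sub, Polynomial.eval_X,
      Polynomial.eval_one, zero_sub, descPochhammer_eval_neg_one, cc, Nat.factorial_succ]
    push_cast
    have hj : ((j : ℂ) + 1) ≠ 0 := by
      have : (0:ℝ) < (j:ℝ) + 1 := by positivity
      exact_mod_cast (by exact_mod_cast this.ne' : ((j:ℂ) + 1) ≠ 0)
    have hfac : ((j.factorial : ℂ)) ≠ 0 := by exact_mod_cast Nat.factorial_ne_zero j
    field_simp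
    ring

section QQ
variable (Φ : FPS n ≃ₐ[ℂ] FPS n)

lemma pow_apply (m : ℕ) (x : FPS n) : (Φ ^ m) x = ((Φ.toLinearMap) ^ m) x := by
  induction m generalizing x with
  | zero => rfl
  | succ m ih =>
    rw [pow_succ, pow_succ, AlgEquiv.mul_apply, Module.End.mul_apply]
    exact ih (Φ x)

lemma coeff_pow_eq (h2 : ∀ i, OrderGE (Φ (Z i) - Z i) 2) (m : ℕ) (e : Fin n →₀ ℕ) (h : FPS n) :
    MvPowerSeries.coeff (R := ℂ) e ((Φ ^ m) h) =
      ∑ j ∈ Finset.range (m + 1), (m.choose j : ℂ) * MvPowerSeries.coeff (R := ℂ) e ((Δop Φ ^ j) h) := by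
  rw [pow_apply]
  have hE : Φ.toLinearMap = Δop Φ + 1 := by rw [Δop, sub_add_cancel]
  rw [hE, (Commute.one_right (Δop Φ)).add_pow m]
  rw [LinearMap.sum_apply, map_sum]
  apply Finset.sum_congr rfl
  intro j _
  rw [one_pow, mul_one, Module.End.mul_apply, Module.End.natCast_apply, map_nsmul, map_nsmul,
    nsmul_eq_mul]

/-- Interpolation polynomial: `Qpoly h e` evaluated at `m` is `coeff e (Φ^m h)`. -/
def Qpoly (h : FPS n) (e : Fin n →₀ ℕ) : Polynomial ℂ :=
  ∑ j ∈ Finset.range (deg e + 1),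
    Polynomial.C (MvPowerSeries.coeff (R := ℂ) e ((Δop Φ ^ j) h)) * Bpoly j

lemma Qpoly_eval_nat (h2 : ∀ i, OrderGE (Φ (Z i) - Z i) 2) (h : FPS n) (e : Fin n →₀ ℕ)
    (m : ℕ) : (Qpoly Φ h e).eval (m : ℂ) = MvPowerSeries.coeff (R := ℂ) e ((Φ ^ m) h) := by
  rw [Qpoly, Polynomial.eval_finset_sum, coeff_pow_eq Φ h2]
  have hL : ∀ j ∈ Finset.range (deg e + 1),
      (Polynomial.C (MvPowerSeries.coeff (R := ℂ) e ((Δop Φ ^ j) h)) * Bpoly j).eval (m : ℂ)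
        = (m.choose j : ℂ) * MvPowerSeries.coeff (R := ℂ) e ((Δop Φ ^ j) h) := by
    intro j _
    rw [Polynomial.eval_mul, Polynomial.eval_C, Bpoly_eval_nat, mul_comm]
  rw [Finset.sum_congr rfl hL]
  rw [Finset.sum_subset (Finset.range_subset_range.mpr (by omega :
        deg e + 1 ≤ m + deg e + 2))]
  rw [← Finset.sum_subset (Finset.range_subset_range.mpr (by omega :
        m + 1 ≤ m + deg e + 2))]
  · intro j hj hnj
    rw [Finset.mem_range] at hj hnj
    rw [Nat.choose_eq_zero_of_lt (by omega), Nat.cast_zero, zero_mul]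
  · intro j hj hnj
    rw [Finset.mem_range] at hj hnj
    rw [delta_pow_order Φ h2 j h e (by omega), mul_zero]

lemma Qpoly_eval_zero (h : FPS n) (e : Fin n →₀ ℕ) :
    (Qpoly Φ h e).eval 0 = MvPowerSeries.coeff (R := ℂ) e h := by
  rw [Qpoly, Polynomial.eval_finset_sum]
  rw [Finset.sum_eq_single 0]
  · rw [Polynomial.eval_mul, Polynomial.eval_C, Bpoly_eval_zero_zero, mul_one, pow_zero]
    rfl
  · intro j _ hj
    obtain ⟨j', rfl⟩ := Nat.exists_eq_succ_of_ne_zero hj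
    rw [Polynomial.eval_mul, Bpoly_eval_zero_succ, mul_zero]
  · intro habs
    exact absurd (Finset.mem_range.mpr (by omega)) habs

lemma Qpoly_deriv_zero (h : FPS n) (e : Fin n →₀ ℕ) :
    (Polynomial.derivative (Qpoly Φ h e)).eval 0 = MvPowerSeries.coeff (R := ℂ) e (Dfun Φ h) := by
  rw [Qpoly, Polynomial.derivative_sum, Polynomial.eval_finset_sum, Dfun_coeff]
  apply Finset.sum_congr rfl
  intro j _
  rw [Polynomial.derivative_C_mul, Polynomial.eval_mul, Polynomial.eval_C, Bpoly_deriv_zero,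
    mul_comm]

lemma Qpoly_mul (h2 : ∀ i, OrderGE (Φ (Z i) - Z i) 2) (a b : FPS n) (d : Fin n →₀ ℕ) :
    Qpoly Φ (a * b) d = ∑ p ∈ Finset.HasAntidiagonal.antidiagonal d, Qpoly Φ a p.1 * Qpoly Φ b p.2 := by
  apply Polynomial.eq_of_infinite_eval_eq
  apply Set.Infinite.mono (t := {x | (Qpoly Φ (a * b) d).eval x
    = (∑ p ∈ Finset.HasAntidiagonal.antidiagonal d, Qpoly Φ a p.1 * Qpoly Φ b p.2).eval x})
    (s := Set.range (Nat.cast : ℕ → ℂ))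
  swap
  · exact Set.infinite_range_of_injective
      (Nat.cast_injective : Function.Injective (Nat.cast : ℕ → ℂ))
  rintro x ⟨m, rfl⟩
  show (Qpoly Φ (a * b) d).eval (m : ℂ) = _
  rw [Qpoly_eval_nat Φ h2, map_mul, MvPowerSeries.coeff_mul, Polynomial.eval_finset_sum]
  apply Finset.sum_congr rfl
  intro p _
  rw [Polynomial.eval_mul, Qpoly_eval_nat Φ h2, Qpoly_eval_nat Φ h2]

lemma Dfun_leibniz (h2 : ∀ i, OrderGE (Φ (Z i) - Z i) 2) (a b : FPS n) :
    Dfun Φ (a * b) = a * Dfun Φ b + b * Dfun Φ a := by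
  apply MvPowerSeries.ext
  intro d
  rw [← Qpoly_deriv_zero Φ (a * b) d, Qpoly_mul Φ h2 a b d, Polynomial.derivative_sum,
    Polynomial.eval_finset_sum]
  have hterm : ∀ p ∈ Finset.HasAntidiagonal.antidiagonal d,
      (Polynomial.derivative (Qpoly Φ a p.1 * Qpoly Φ b p.2)).eval 0
        = MvPowerSeries.coeff (R := ℂ) p.1 (Dfun Φ a) * MvPowerSeries.coeff (R := ℂ) p.2 b
          + MvPowerSeries.coeff (R := ℂ) p.1 a * MvPowerSeries.coeff (R := ℂ) p.2 (Dfun Φ b) := by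
    intro p _
    rw [Polynomial.derivative_mul, Polynomial.eval_add, Polynomial.eval_mul, Polynomial.eval_mul,
      Qpoly_deriv_zero, Qpoly_deriv_zero, Qpoly_eval_zero, Qpoly_eval_zero]
  rw [Finset.sum_congr rfl hterm, Finset.sum_add_distrib]
  rw [map_add, mul_comm b (Dfun Φ a), MvPowerSeries.coeff_mul, MvPowerSeries.coeff_mul]
  ring

lemma delta_pow_one (j : ℕ) : (Δop Φ ^ (j + 1)) (1 : FPS n) = 0 := by
  rw [pow_succ, Module.End.mul_apply]
  have h1 : Δop Φ (1 : FPS n) = 0 := by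
    rw [Δop_apply, map_one, sub_self]
  rw [h1, map_zero]

lemma Dfun_one : Dfun Φ (1 : FPS n) = 0 := by
  apply MvPowerSeries.ext
  intro d
  rw [Dfun_coeff, map_zero]
  apply Finset.sum_eq_zero
  intro j _
  cases j with
  | zero => rw [cc_zero, zero_mul]
  | succ j => rw [delta_pow_one, map_zero, mul_zero]

lemma delta_pow_commute (Ψ : FPS n ≃ₐ[ℂ] FPS n) (hcomm : ∀ x, Ψ (Φ x) = Φ (Ψ x))
    (j : ℕ) (x : FPS n) : (Δop Φ ^ j) (Ψ x) = Ψ ((Δop Φ ^ j) x) := by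
  induction j generalizing x with
  | zero => rfl
  | succ j ih =>
    rw [pow_succ, Module.End.mul_apply, Module.End.mul_apply]
    have h1 : Δop Φ (Ψ x) = Ψ (Δop Φ x) := by
      rw [Δop_apply, Δop_apply, map_sub, hcomm]
    rw [h1, ih]

lemma Dfun_commute (h2 : ∀ i, OrderGE (Φ (Z i) - Z i) 2) (Ψ : FPS n ≃ₐ[ℂ] FPS n)
    (hcomm : ∀ x, Ψ (Φ x) = Φ (Ψ x))
    (hΨ0 : ∀ i, MvPowerSeries.constantCoeff (σ := Fin n) (R := ℂ) (Ψ (Z i)) = 0) (h : FPS n) :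
    Dfun Φ (Ψ h) = Ψ (Dfun Φ h) := by
  apply MvPowerSeries.ext
  intro d
  set N := deg d with hN
  set S : FPS n := ∑ j ∈ Finset.range (N + 1), cc j • ((Δop Φ ^ j) h) with hS
  have hcoeffS : ∀ e : Fin n →₀ ℕ,
      MvPowerSeries.coeff (R := ℂ) e S
        = ∑ j ∈ Finset.range (N + 1), cc j * MvPowerSeries.coeff (R := ℂ) e ((Δop Φ ^ j) h) := by
    intro e
    rw [hS, map_sum]
    apply Finset.sum_congr rfl
    intro j _
    rw [MvPowerSeries.coeff_smul]
  have hres : OrderGE (Dfun Φ h - S) (N + 1) := by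
    intro e he
    rw [map_sub, hcoeffS, Dfun_stable Φ h2 h e (by omega : deg e ≤ N), sub_self]
  have hRHS : MvPowerSeries.coeff (R := ℂ) d (Ψ (Dfun Φ h)) = MvPowerSeries.coeff (R := ℂ) d (Ψ S) := by
    have hsplit : Ψ (Dfun Φ h) = Ψ S + Ψ (Dfun Φ h - S) := by
      rw [← map_add]; congr 1; ring
    rw [hsplit, map_add, auto_preserves Ψ hΨ0 (N + 1) _ hres d (by omega), add_zero]
  rw [hRHS]
  have hPsiS : MvPowerSeries.coeff (R := ℂ) d (Ψ S)
      = ∑ j ∈ Finset.range (N + 1), cc j * MvPowerSeries.coeff (R := ℂ) d (Ψ ((Δop Φ ^ j) h)) := by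
    rw [hS, map_sum, map_sum]
    apply Finset.sum_congr rfl
    intro j _
    rw [map_smul, MvPowerSeries.coeff_smul]
  rw [hPsiS, Dfun_stable Φ h2 (Ψ h) d (le_refl N)]
  apply Finset.sum_congr rfl
  intro j _
  rw [delta_pow_commute Φ Ψ hcomm]

end QQ

end Auto

lemma deg_eq_one {d : Fin n →₀ ℕ} (h : deg d = 1) : ∃ j, d = Finsupp.single j 1 := by
  have hd0 : d ≠ 0 := by
    intro h0; rw [h0, deg_zero] at h; omega
  have hne : d.support.Nonempty := Finsupp.support_nonempty_iff.mpr hd0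
  obtain ⟨j, hj⟩ := hne
  have hdj : d j ≠ 0 := Finsupp.mem_support_iff.mp hj
  have hdj1 : d j = 1 := by
    have := apply_le_deg d j; omega
  refine ⟨j, ?_⟩
  ext j'
  rw [Finsupp.single_apply]
  by_cases hjj : j = j'
  · subst hjj; rw [if_pos rfl]; exact hdj1
  · rw [if_neg hjj]
    by_contra hdj'
    have hj' : j' ∈ d.support := Finsupp.mem_support_iff.mpr hdj'
    have hsub : ({j, j'} : Finset (Fin n)) ⊆ d.support := by
      intro x hx
      rcases Finset.mem_insert.mp hx with rfl | hx
      · exact hj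
      · rw [Finset.mem_singleton.mp hx]; exact hj'
    have hsum : d j + d j' ≤ deg d := by
      have h1 : ∑ x ∈ ({j, j'} : Finset (Fin n)), d x ≤ ∑ x ∈ d.support, d x :=
        Finset.sum_le_sum_of_subset hsub
      rw [Finset.sum_pair hjj] at h1
      exact h1
    omega

/-- An abelian subgroup `G` of formal diffeomorphisms of `(ℂⁿ,0)`
either admits a nonzero invariant formal vector field, or its only element
tangent to the identity is the identity. -/
theorem abelian_invariant_vector_field_or_trivial_tangent
    (n : ℕ) (hn : 1 ≤ n) (G : Subgroup (FDiff n))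
    (hab : ∀ g ∈ G, ∀ h ∈ G, g * h = h * g) :
    (∃ X : FVF n, X ≠ 0 ∧ VanishesAtZero X ∧ ∀ g ∈ G, InvariantBy g X) ∨
    (∀ g ∈ G, TangentToId g → g = 1) := by
  by_cases hG : ∀ g ∈ G, TangentToId g → g = 1
  · exact Or.inr hG
  push_neg at hG
  obtain ⟨f, hfG, hft, hf1⟩ := hG
  left
  set Φ : FPS n ≃ₐ[ℂ] FPS n := f.unop with hΦ
  -- `Φ` is tangent to the identity in the `OrderGE` sense
  have h2 : ∀ i, OrderGE (Φ (Z i) - Z i) 2 := by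
    intro i d hd
    rw [map_sub]
    interval_cases hdeg : deg d
    · have hd0 : d = 0 := eq_zero_of_deg_eq_zero hdeg
      subst hd0
      rw [MvPowerSeries.coeff_zero_eq_constantCoeff]
      have h1 : MvPowerSeries.constantCoeff (σ := Fin n) (R := ℂ) (Φ (Z i)) = 0 := hft.1 i
      have hz : MvPowerSeries.constantCoeff (σ := Fin n) (R := ℂ) (Z i) = 0 := by
        rw [Z, MvPowerSeries.constantCoeff_X]
      rw [h1, hz, sub_zero]
    · obtain ⟨j, rfl⟩ := deg_eq_one hdeg
      have h1 : MvPowerSeries.coeff (R := ℂ) (Finsupp.single j 1) (Φ (Z i))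
          = if j = i then 1 else 0 := hft.2 i j
      have hz : MvPowerSeries.coeff (R := ℂ) (Finsupp.single j 1) (Z i)
          = if j = i then 1 else 0 := by
        rw [Z, MvPowerSeries.coeff_X]
        by_cases hji : j = i
        · subst hji; rw [if_pos rfl, if_pos rfl]
        · rw [if_neg, if_neg hji]
          intro hcontra
          exact hji ((Finsupp.single_left_inj one_ne_zero).mp hcontra)
      rw [h1, hz, sub_self]
  -- `Φ` moves some coordinate
  have hΦne : ∃ i, Φ (Z i) ≠ Z i := by
    by_contra hno
    push_neg at hno
    apply hf1
    have hunop : f.unop = (1 : FPS n ≃ₐ[ℂ] FPS n) := by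
      apply AlgEquiv.ext
      intro x
      exact fix_coords Φ hno x
    apply MulOpposite.unop_injective
    rw [hunop, MulOpposite.unop_one]
  -- minimal order of deviation
  have hex : ∃ m, ∃ i d, deg d = m ∧ MvPowerSeries.coeff (R := ℂ) d (Φ (Z i) - Z i) ≠ 0 := by
    obtain ⟨i, hi⟩ := hΦne
    have hsub : Φ (Z i) - Z i ≠ 0 := sub_ne_zero.mpr hi
    have : ∃ d, MvPowerSeries.coeff (R := ℂ) d (Φ (Z i) - Z i) ≠ 0 := by
      by_contra hno
      push_neg at hno
      apply hsub
      apply MvPowerSeries.ext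
      intro d
      rw [hno d, map_zero]
    obtain ⟨d, hd⟩ := this
    exact ⟨deg d, i, d, rfl, hd⟩
  set k := Nat.find hex with hkdef
  have hk2 : 2 ≤ k := by
    rw [hkdef, Nat.le_find_iff]
    intro m hm ⟨i, d, hdm, hcd⟩
    exact hcd (h2 i d (by omega))
  have horder : ∀ i, OrderGE (Φ (Z i) - Z i) k := by
    intro i d hd
    by_contra hcd
    exact (Nat.find_min hex hd) ⟨i, d, rfl, hcd⟩
  obtain ⟨i₀, d₀, hd₀, hc₀⟩ := Nat.find_spec hex
  -- the logarithm as a derivation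
  let Dlin : FPS n →ₗ[ℂ] FPS n :=
    { toFun := Dfun Φ
      map_add' := Dfun_add Φ
      map_smul' := Dfun_smul Φ }
  let X : FVF n :=
    { toLinearMap := Dlin
      map_one_eq_zero' := Dfun_one Φ
      leibniz' := by
        intro a b
        show Dfun Φ (a * b) = a • Dfun Φ b + b • Dfun Φ a
        rw [smul_eq_mul, smul_eq_mul]
        exact Dfun_leibniz Φ h2 a b }
  have hXapp : ∀ h : FPS n, X h = Dfun Φ h := fun h => rfl
  refine ⟨X, ?_, ?_, ?_⟩
  · -- X ≠ 0
    intro hX0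
    apply hc₀
    have hXZ : X (Z i₀) = 0 := by rw [hX0]; rfl
    rw [hXapp] at hXZ
    have hcoeff : MvPowerSeries.coeff (R := ℂ) d₀ (Dfun Φ (Z i₀))
        = MvPowerSeries.coeff (R := ℂ) d₀ (Φ (Z i₀) - Z i₀) := by
      rw [Dfun_coeff, hd₀]
      rw [Finset.sum_eq_single 1]
      · rw [cc_one, one_mul, pow_one, Δop_apply]
      · intro j hj hj1
        rw [Finset.mem_range] at hj
        match j, hj1 with
        | 0, _ => rw [cc_zero, zero_mul]
        | (t + 2), _ =>
          have hsplit : (Δop Φ ^ (t + 2)) (Z i₀) = (Δop Φ ^ (t + 1)) (Δop Φ (Z i₀)) := by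
            rw [pow_succ, Module.End.mul_apply]
          have hordZ : OrderGE (Δop Φ (Z i₀)) k := by
            rw [Δop_apply]
            exact horder i₀
          have hraise := delta_pow_raise Φ h2 (t + 1) hordZ
          rw [hsplit, hraise d₀ (by omega), mul_zero]
      · intro h1; exact absurd (Finset.mem_range.mpr (by omega)) h1
    rw [hXZ, map_zero] at hcoeff
    exact hcoeff.symm
  · -- vanishes at zero
    intro i
    rw [hXapp, ← MvPowerSeries.coeff_zero_eq_constantCoeff_apply, Dfun_coeff, deg_zero]
    rw [Finset.sum_range_one, cc_zero, zero_mul]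
  · -- invariance
    intro g hg h
    set Ψ : FPS n ≃ₐ[ℂ] FPS n := g.unop with hΨdef
    have hcommeq : Ψ * Φ = Φ * Ψ := by
      have := congrArg MulOpposite.unop (hab f hfG g hg)
      rw [MulOpposite.unop_mul, MulOpposite.unop_mul] at this
      exact this
    have hcomm : ∀ x, Ψ (Φ x) = Φ (Ψ x) := by
      intro x
      have := DFunLike.congr_fun hcommeq x
      rw [AlgEquiv.mul_apply, AlgEquiv.mul_apply] at this
      exact this
    have hΨ0 : ∀ i, MvPowerSeries.constantCoeff (σ := Fin n) (R := ℂ) (Ψ (Z i)) = 0 := by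
      intro i
      by_contra hc
      have hu1 : IsUnit (MvPowerSeries.constantCoeff (σ := Fin n) (R := ℂ) (Ψ (Z i))) :=
        isUnit_iff_ne_zero.mpr hc
      have hu2 : IsUnit (Ψ (Z i)) := MvPowerSeries.isUnit_iff_constantCoeff.mpr hu1
      have hu3 : IsUnit (Z i) := by
        have := hu2.map Ψ.symm
        rwa [AlgEquiv.symm_apply_apply] at this
      have hu4 : IsUnit (MvPowerSeries.constantCoeff (σ := Fin n) (R := ℂ) (Z i)) :=
        hu3.map (MvPowerSeries.constantCoeff (σ := Fin n) (R := ℂ))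
      rw [Z, MvPowerSeries.constantCoeff_X] at hu4
      exact (by simp : ¬ IsUnit (0 : ℂ)) hu4
    rw [hXapp, hXapp]
    exact Dfun_commute Φ h2 Ψ hcomm hΨ0 h


end FormalGroups
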